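/- Let δ be an expansion function on L, let p ∈ L be a proper element and b ∈ L. If b is weakly δ-primary to p (that is, φ₀-δ-primary to p) but b is not δ-primary to p, then p·b = 0. -/

import Mathlib

/-- A multiplicative lattice: a complete lattice with a commutative, associative
multiplication that distributes over arbitrary joins and whose greatest element `1`
is a multiplicative identity.  We also bundle the standing assumptions of the paper:
`L` is compactly generated, `1` is compact, and products of compact elements are
compact. -/
class MultiplicativeLattice (L : Type*) extends CompleteLattice L, CommMonoid L where
  mul_sSup : ∀ (a : L) (s : Set L), a * sSup s = ⨆ x ∈ s, a * x
  one_eq_top : (1 : L) = ⊤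
  compactly_generated : ∀ x : L, ∃ s : Set L,
    (∀ y ∈ s, IsCompactElement y) ∧ sSup s = x
  compact_one : IsCompactElement (1 : L)
  compact_mul : ∀ a b : L, IsCompactElement a →
    IsCompactElement b → IsCompactElement (a * b)

variable {L : Type*}

/-- An expansion function on `L`. -/
def IsExpansion [CompleteLattice L] (δ : L → L) : Prop :=
  (∀ a, a ≤ δ a) ∧ ∀ a b : L, a ≤ b → δ a ≤ δ b

/-- A reduction function on `L`. -/
def IsReduction [CompleteLattice L] (φ : L → L) : Prop :=
  ∀ a, φ a ≤ a

/-- `b` is `φ`-`δ`-primary to `p`. -/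
def PhiDeltaPrimaryTo [MultiplicativeLattice L] (φ δ : L → L) (b p : L) : Prop :=
  ∀ x : L, x * b ≤ p → ¬ x * b ≤ φ p → x ≤ δ p

/-- `b` is `δ`-primary to `p`. -/
def DeltaPrimaryTo [MultiplicativeLattice L] (δ : L → L) (b p : L) : Prop :=
  ∀ x : L, x * b ≤ p → x ≤ δ p

/-- `b` is `φ`-prime to `p`. -/
def PhiPrimeTo [MultiplicativeLattice L] (φ : L → L) (b p : L) : Prop :=
  ∀ x : L, x * b ≤ p → ¬ x * b ≤ φ p → x ≤ p

/-- The radical `√q`: the join of all compact elements some positive power of which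
lies below `q`.  This is the expansion function `δ₁`. -/
def mlRadical [MultiplicativeLattice L] (q : L) : L :=
  sSup {x : L | IsCompactElement x ∧ ∃ n : ℕ, 0 < n ∧ x ^ n ≤ q}

/-- The function `φ_ω(q) = ⋀_{n ≥ 1} qⁿ`. -/
def phiOmega [MultiplicativeLattice L] (q : L) : L := ⨅ n : ℕ, q ^ (n + 1)

/-- The mlResidual `(a : c)`, the join of all `x` with `x * c ≤ a`. -/
def mlResidual [MultiplicativeLattice L] (a c : L) : L := sSup {x : L | x * c ≤ a}
private lemma ml_mul_sup [MultiplicativeLattice L] (a x y : L) :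
    a * (x ⊔ y) = a * x ⊔ a * y := by
  have h := MultiplicativeLattice.mul_sSup a ({x, y} : Set L)
  rw [sSup_pair, iSup_pair] at h; exact h

private lemma ml_mul_le_left [MultiplicativeLattice L] (a b : L) : a * b ≤ a := by
  have h : a * (b ⊔ 1) = a * b ⊔ a * 1 := ml_mul_sup a b 1
  have hb1 : b ⊔ 1 = 1 := by
    rw [MultiplicativeLattice.one_eq_top]; simp
  rw [hb1, mul_one] at h
  calc a * b ≤ a * b ⊔ a := le_sup_left
    _ = a := h.symm

theorem mul_eq_bot_of_weakly_deltaPrimary_not_deltaPrimary [MultiplicativeLattice L]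
    (δ : L → L) (hδ : IsExpansion δ) (p : L) (hp : p < 1) (b : L)
    (h : PhiDeltaPrimaryTo (fun _ => (⊥ : L)) δ b p)
    (hnot : ¬ DeltaPrimaryTo δ b p) :
    p * b = ⊥ := by
  by_contra hpb
  apply hnot
  intro y hy
  simp only [DeltaPrimaryTo, not_forall] at hnot
  obtain ⟨x, hxb, hxd⟩ := hnot
  have hx0 : x * b = ⊥ := by
    by_contra hx0
    exact hxd (h x hxb fun hle => hx0 (le_bot_iff.mp hle))
  -- now show (x ⊔ p) * b ≤ p, nonzero
  have hsup : (x ⊔ p) * b = p * b := by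
    rw [mul_comm, ml_mul_sup, mul_comm b x, mul_comm b p, hx0, bot_sup_eq]
  have hle : (x ⊔ p) * b ≤ p := by rw [hsup]; exact ml_mul_le_left p b
  have hne : ¬ (x ⊔ p) * b ≤ (⊥ : L) := by
    rw [hsup]; exact fun hle => hpb (le_bot_iff.mp hle)
  have := h (x ⊔ p) hle hne
  exact absurd (le_trans le_sup_left this) hxd
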